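/- Let α > 1 and t > 0. For every bounded continuous function y₀ : ℝ → ℂ whose restriction to (-1,1) extends to a continuous function y_{0,e} on the closure of Ω_α = {a + ib : |a| + α|b| < 1} holomorphic in Ω_α, the function y₂(t, a + ib) = ∫_{|x₀|<1} G(t, (a + ib) - x₀) y_{0,e}(x₀) dx₀ satisfies |y₂(t, a + ib)| ≤ 2 √((α² + 1)/(α² − 1)) · sup_{Ω_α} |y_{0,e}| for every a + ib in the closure of Ω_α, where G(t, z) = (4πt)^{-1/2} exp(-z²/(4t)). -/

import Mathlib

open Real Set MeasureTheory intervalIntegral Filter Topology Complex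


lemma rhN_smul (α r : ℝ) (hr : 0 ≤ r) (z : ℂ) :
    |(r • z).re| + α * |(r • z).im| = r * (|z.re| + α * |z.im|) := by
  rw [Complex.smul_re, Complex.smul_im, smul_eq_mul, smul_eq_mul, abs_mul, abs_mul,
    _root_.abs_of_nonneg hr]
  ring

lemma convex_rhombus (α c : ℝ) (hα : 0 ≤ α) :
    Convex ℝ {z : ℂ | |z.re| + α * |z.im| < c} := by
  intro x hx y hy s u hs hu hsu
  simp only [mem_setOf_eq] at *
  have h1 : |(s • x + u • y).re| ≤ s * |x.re| + u * |y.re| := by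
    rw [Complex.add_re, Complex.smul_re, Complex.smul_re, smul_eq_mul, smul_eq_mul]
    calc |s * x.re + u * y.re| ≤ |s * x.re| + |u * y.re| := abs_add_le _ _
      _ = s * |x.re| + u * |y.re| := by
          rw [abs_mul, abs_mul, _root_.abs_of_nonneg hs, _root_.abs_of_nonneg hu]
  have h2 : |(s • x + u • y).im| ≤ s * |x.im| + u * |y.im| := by
    rw [Complex.add_im, Complex.smul_im, Complex.smul_im, smul_eq_mul, smul_eq_mul]
    calc |s * x.im + u * y.im| ≤ |s * x.im| + |u * y.im| := abs_add_le _ _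
      _ = s * |x.im| + u * |y.im| := by
          rw [abs_mul, abs_mul, _root_.abs_of_nonneg hs, _root_.abs_of_nonneg hu]
  have key : |(s • x + u • y).re| + α * |(s • x + u • y).im| ≤
      s * (|x.re| + α * |x.im|) + u * (|y.re| + α * |y.im|) := by nlinarith
  have hm : s * (|x.re| + α * |x.im|) + u * (|y.re| + α * |y.im|) ≤
      max (|x.re| + α * |x.im|) (|y.re| + α * |y.im|) := by
    have e1 := mul_le_mul_of_nonneg_left
      (le_max_left (|x.re| + α * |x.im|) (|y.re| + α * |y.im|)) hs
    have e2 := mul_le_mul_of_nonneg_left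
      (le_max_right (|x.re| + α * |x.im|) (|y.re| + α * |y.im|)) hu
    have e3 : s * max (|x.re| + α * |x.im|) (|y.re| + α * |y.im|)
        + u * max (|x.re| + α * |x.im|) (|y.re| + α * |y.im|)
        = max (|x.re| + α * |x.im|) (|y.re| + α * |y.im|) := by
      rw [← add_mul, hsu, one_mul]
    linarith
  calc |(s • x + u • y).re| + α * |(s • x + u • y).im| ≤ _ := key
    _ ≤ max (|x.re| + α * |x.im|) (|y.re| + α * |y.im|) := hm
    _ < c := max_lt hx hy

lemma closure_rhombus (α : ℝ) (hα : 0 < α) :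
    closure {z : ℂ | |z.re| + α * |z.im| < 1} = {z : ℂ | |z.re| + α * |z.im| ≤ 1} := by
  have hcontN : Continuous fun z : ℂ => |z.re| + α * |z.im| := by fun_prop
  apply Subset.antisymm
  · refine closure_minimal (fun z hz => ?_) (isClosed_le hcontN continuous_const)
    simp only [mem_setOf_eq] at hz ⊢
    exact le_of_lt hz
  · intro z hz
    rw [mem_closure_iff_seq_limit]
    refine ⟨fun n => ((n + 1 : ℝ)/(n + 2)) • z, fun n => ?_, ?_⟩
    · have h1 : (0:ℝ) ≤ (n + 1 : ℝ)/(n + 2) := by positivity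
      have h2 : ((n + 1 : ℝ)/(n + 2)) < 1 := by
        rw [div_lt_one (by positivity)]; linarith
      simp only [mem_setOf_eq] at hz ⊢
      rw [rhN_smul α _ h1]
      calc ((n + 1 : ℝ)/(n + 2)) * (|z.re| + α * |z.im|) ≤ ((n + 1 : ℝ)/(n + 2)) * 1 :=
            mul_le_mul_of_nonneg_left hz h1
        _ < 1 := by rw [mul_one]; exact h2
    · have h : Tendsto (fun n : ℕ => ((n + 1 : ℝ)/(n + 2))) atTop (𝓝 1) := by
        have := (tendsto_natCast_div_add_atTop (1:ℝ)).comp (tendsto_add_atTop_nat 1)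
        refine this.congr fun n => ?_
        simp only [Function.comp_apply]
        push_cast; ring_nf
      simpa using h.smul_const z


lemma abs_le_of_mem_uIcc {x p q : ℝ} (h : x ∈ Set.uIcc p q) : |x| ≤ max |p| |q| := by
  rw [Set.uIcc_eq_union] at h
  rcases h with h | h <;> rw [Set.mem_Icc] at h <;>
    [exact abs_le_max_abs_abs h.1 h.2; exact (abs_le_max_abs_abs h.1 h.2).trans (by rw [max_comm])]

lemma abs_sub_le_of_mem_uIcc {x p q : ℝ} (h : x ∈ Set.uIcc p q) : |x - p| ≤ |q - p| := by
  rw [Set.uIcc_eq_union] at h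
  rcases h with h | h <;> rw [Set.mem_Icc] at h <;> rw [abs_le] <;>
    constructor <;> linarith [le_abs_self (q - p), neg_abs_le (q - p), abs_nonneg (q - p)]

lemma rhombus_hasDerivAt (α c : ℝ) (hα : 0 < α) (f : ℂ → ℂ)
    (hf : DifferentiableOn ℂ f {z : ℂ | |z.re| + α * |z.im| < c}) :
    ∀ w ∈ {z : ℂ | |z.re| + α * |z.im| < c},
      HasDerivAt (fun w : ℂ => (∫ x in (0:ℝ)..w.re, f x) +
        Complex.I * ∫ y in (0:ℝ)..w.im, f (w.re + y * Complex.I)) (f w) w := by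
  intro w hw
  set U := {z : ℂ | |z.re| + α * |z.im| < c} with hUdef
  have hUopen : IsOpen U := by
    have : Continuous fun z : ℂ => |z.re| + α * |z.im| := by fun_prop
    exact isOpen_lt this continuous_const
  have hfc : ContinuousOn f U := hf.continuousOn
  have hwlt : |w.re| + α * |w.im| < c := hw
  set a := w.re with ha
  set b := w.im with hb
  set δ₀ := (c - (|a| + α * |b|)) / (2 * (1 + α)) with hδ₀
  have hδ₀pos : 0 < δ₀ := by
    apply div_pos (by simp only [ha, hb] at hwlt ⊢; linarith) (by linarith)
  -- membership helper
  have hsub : ∀ ζ : ℂ, |ζ.re| ≤ |a| + δ₀ → |ζ.im| ≤ |b| + δ₀ → ζ ∈ U := by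
    intro ζ h1 h2
    have h3 : α * |ζ.im| ≤ α * (|b| + δ₀) := mul_le_mul_of_nonneg_left h2 hα.le
    have : |a| + δ₀ + α * (|b| + δ₀) = |a| + α * |b| + (1 + α) * δ₀ := by ring
    have h4 : (1 + α) * δ₀ = (c - (|a| + α * |b|)) / 2 := by
      rw [hδ₀]; field_simp
    simp only [hUdef, mem_setOf_eq]
    linarith
  rw [hasDerivAt_iff_isLittleO, Asymptotics.isLittleO_iff]
  intro ε hε
  obtain ⟨δ', hδ'pos, hδ'⟩ := Metric.continuousAt_iff.mp
    ((hf.differentiableAt (hUopen.mem_nhds hw)).continuousAt) (ε/2)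
    (by positivity)
  set δ := min δ₀ (δ'/2) with hδdef
  have hδpos : 0 < δ := lt_min hδ₀pos (by positivity)
  filter_upwards [Metric.ball_mem_nhds w hδpos] with w' hw'
  rw [Metric.mem_ball, dist_eq_norm] at hw'
  set a' := w'.re with ha'
  set b' := w'.im with hb'
  have hra : |a' - a| ≤ ‖w' - w‖ := by
    have := Complex.abs_re_le_norm (w' - w); simpa using this
  have hrb : |b' - b| ≤ ‖w' - w‖ := by
    have := Complex.abs_im_le_norm (w' - w); simpa using this
  have hra' : |a'| ≤ |a| + δ₀ := by
    have : |a'| ≤ |a| + |a' - a| := by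
      calc |a'| = |a + (a' - a)| := by ring_nf
        _ ≤ |a| + |a' - a| := abs_add_le _ _
    have h2 : |a' - a| ≤ δ₀ := le_trans hra (le_trans hw'.le (min_le_left _ _))
    linarith
  have hrb' : |b'| ≤ |b| + δ₀ := by
    have : |b'| ≤ |b| + |b' - b| := by
      calc |b'| = |b + (b' - b)| := by ring_nf
        _ ≤ |b| + |b' - b| := abs_add_le _ _
    have h2 : |b' - b| ≤ δ₀ := le_trans hrb (le_trans hw'.le (min_le_left _ _))
    linarith
  -- continuity of f along the various segments
  have hseg1 : ∀ (p q : ℝ), |p| ≤ |a| + δ₀ → |q| ≤ |a| + δ₀ →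
      IntervalIntegrable (fun x : ℝ => f x) volume p q := by
    intro p q hp hq
    apply ContinuousOn.intervalIntegrable
    apply hfc.comp Complex.continuous_ofReal.continuousOn
    intro x hx
    apply hsub
    · simpa using (abs_le_of_mem_uIcc hx).trans (max_le hp hq)
    · simp; positivity
  have hseg2 : ∀ (A p q : ℝ), |A| ≤ |a| + δ₀ → |p| ≤ |b| + δ₀ → |q| ≤ |b| + δ₀ →
      IntervalIntegrable (fun y : ℝ => f (A + y * Complex.I)) volume p q := by
    intro A p q hA hp hq
    apply ContinuousOn.intervalIntegrable
    apply hfc.comp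
    · exact (continuous_const.add
        ((Complex.continuous_ofReal.mul continuous_const))).continuousOn
    · intro y hy
      apply hsub
      · simpa using hA
      · simpa using (abs_le_of_mem_uIcc hy).trans (max_le hp hq)
  have habs0 : |(0:ℝ)| ≤ |a| + δ₀ := by simp; positivity
  have habsa : |a| ≤ |a| + δ₀ := by linarith
  have habsb : |b| ≤ |b| + δ₀ := by linarith
  have habs0b : |(0:ℝ)| ≤ |b| + δ₀ := by simp; positivity
  have Hrect : DifferentiableOn ℂ f (Set.uIcc a a' ×ℂ Set.uIcc (0:ℝ) b) := by
    apply hf.mono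
    intro ζ hζ
    rw [Complex.mem_reProdIm] at hζ
    obtain ⟨h1, h2⟩ := hζ
    exact hsub ζ ((abs_le_of_mem_uIcc h1).trans (max_le habsa hra'))
      ((abs_le_of_mem_uIcc h2).trans (max_le (by simpa using habs0b) habsb))
  have goursat := Complex.integral_boundary_rect_eq_zero_of_differentiableOn f (↑a)
    (↑a' + ↑b * Complex.I) (by simpa using Hrect)
  simp only [Complex.add_re, Complex.add_im, Complex.ofReal_re, Complex.ofReal_im,
    Complex.mul_re, Complex.mul_im, Complex.I_re, Complex.I_im, mul_zero, mul_one,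
    zero_mul, sub_zero, zero_add, add_zero, sub_self, Complex.ofReal_zero,
    smul_eq_mul] at goursat
  have split1 : (∫ x in (0:ℝ)..a', f ↑x) = (∫ x in (0:ℝ)..a, f ↑x) + ∫ x in a..a', f ↑x :=
    (integral_add_adjacent_intervals (hseg1 0 a habs0 habsa) (hseg1 a a' habsa hra')).symm
  have split2 : (∫ y in (0:ℝ)..b', f (↑a' + ↑y * Complex.I))
      = (∫ y in (0:ℝ)..b, f (↑a' + ↑y * Complex.I))
        + ∫ y in b..b', f (↑a' + ↑y * Complex.I) :=
    (integral_add_adjacent_intervals (hseg2 a' 0 b hra' habs0b habsb)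
      (hseg2 a' b b' hra' habsb hrb')).symm
  show ‖((∫ x in (0:ℝ)..a', f ↑x) + Complex.I * ∫ y in (0:ℝ)..b', f (↑a' + ↑y * Complex.I))
      - ((∫ x in (0:ℝ)..a, f ↑x) + Complex.I * ∫ y in (0:ℝ)..b, f (↑a + ↑y * Complex.I))
      - (w' - w) • f w‖ ≤ ε * ‖w' - w‖
  have hw'w : w' - w = (↑(a' - a) : ℂ) + ↑(b' - b) * Complex.I := by
    apply Complex.ext <;>
      simp [ha, hb, ha', hb']
  have key : ((∫ x in (0:ℝ)..a', f ↑x)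
        + Complex.I * ∫ y in (0:ℝ)..b', f (↑a' + ↑y * Complex.I))
      - ((∫ x in (0:ℝ)..a, f ↑x) + Complex.I * ∫ y in (0:ℝ)..b, f (↑a + ↑y * Complex.I))
      - (w' - w) • f w
      = (∫ x in a..a', (f (↑x + ↑b * Complex.I) - f w))
        + Complex.I * ∫ y in b..b', (f (↑a' + ↑y * Complex.I) - f w) := by
    rw [intervalIntegral.integral_sub (by
        apply ContinuousOn.intervalIntegrable
        apply hfc.comp ((continuous_ofReal.add continuous_const).continuousOn)
        intro x hx
        exact hsub _ (by simpa using (abs_le_of_mem_uIcc hx).trans (max_le habsa hra'))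
          (by simpa using habsb)) intervalIntegrable_const,
      intervalIntegral.integral_sub (hseg2 a' b b' hra' habsb hrb') intervalIntegrable_const,
      intervalIntegral.integral_const, intervalIntegral.integral_const,
      split1, split2, hw'w, smul_eq_mul, Complex.real_smul, Complex.real_smul]
    push_cast
    linear_combination goursat
  rw [key]
  have hXle : ‖∫ x in a..a', (f (↑x + ↑b * Complex.I) - f w)‖ ≤ ε/2 * |a' - a| := by
    apply intervalIntegral.norm_integral_le_of_norm_le_const
    intro x hx
    have hx' : x ∈ Set.uIcc a a' := Set.uIoc_subset_uIcc hx
    have hd : dist (↑x + ↑b * Complex.I) w < δ' := by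
      rw [dist_eq_norm]
      have : (↑x + ↑b * Complex.I) - w = ((x - a : ℝ) : ℂ) := by
        apply Complex.ext <;> simp [ha, hb]
      rw [this, Complex.norm_real]
      calc ‖x - a‖ = |x - a| := rfl
        _ ≤ |a' - a| := abs_sub_le_of_mem_uIcc hx'
        _ ≤ ‖w' - w‖ := hra
        _ < δ := hw'
        _ ≤ δ' := le_trans (min_le_right _ _) (by linarith)
    have := hδ' hd
    rw [dist_eq_norm] at this
    exact this.le
  have hYle : ‖∫ y in b..b', (f (↑a' + ↑y * Complex.I) - f w)‖ ≤ ε/2 * |b' - b| := by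
    apply intervalIntegral.norm_integral_le_of_norm_le_const
    intro y hy
    have hy' : y ∈ Set.uIcc b b' := Set.uIoc_subset_uIcc hy
    have hd : dist (↑a' + ↑y * Complex.I) w < δ' := by
      rw [dist_eq_norm]
      have hab : (↑a' + ↑y * Complex.I) - w = ((a' - a : ℝ) : ℂ)
          + ((y - b : ℝ) : ℂ) * Complex.I := by
        apply Complex.ext <;> simp [ha, hb]
      rw [hab]
      have h1 : ‖((a' - a : ℝ) : ℂ) + ((y - b : ℝ) : ℂ) * Complex.I‖ ≤ |a' - a| + |y - b| := by
        calc ‖((a' - a : ℝ) : ℂ) + ((y - b : ℝ) : ℂ) * Complex.I‖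
            ≤ ‖((a' - a : ℝ) : ℂ)‖ + ‖((y - b : ℝ) : ℂ) * Complex.I‖ := norm_add_le _ _
          _ = |a' - a| + |y - b| := by
              rw [norm_mul, Complex.norm_I, mul_one, Complex.norm_real, Complex.norm_real,
                Real.norm_eq_abs, Real.norm_eq_abs]
      have h2 : |y - b| ≤ |b' - b| := abs_sub_le_of_mem_uIcc hy'
      have h3 : |a' - a| < δ := lt_of_le_of_lt hra hw'
      have h4 : |b' - b| < δ := lt_of_le_of_lt hrb hw'
      have h5 : δ ≤ δ'/2 := min_le_right _ _
      linarith
    have := hδ' hd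
    rw [dist_eq_norm] at this
    exact this.le
  calc ‖(∫ x in a..a', (f (↑x + ↑b * Complex.I) - f w))
        + Complex.I * ∫ y in b..b', (f (↑a' + ↑y * Complex.I) - f w)‖
      ≤ ‖∫ x in a..a', (f (↑x + ↑b * Complex.I) - f w)‖
        + ‖Complex.I * ∫ y in b..b', (f (↑a' + ↑y * Complex.I) - f w)‖ := norm_add_le _ _
    _ = ‖∫ x in a..a', (f (↑x + ↑b * Complex.I) - f w)‖
        + ‖∫ y in b..b', (f (↑a' + ↑y * Complex.I) - f w)‖ := by
        rw [norm_mul, Complex.norm_I, one_mul]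
    _ ≤ ε/2 * |a' - a| + ε/2 * |b' - b| := add_le_add hXle hYle
    _ ≤ ε/2 * ‖w' - w‖ + ε/2 * ‖w' - w‖ := by
        have h1 := mul_le_mul_of_nonneg_left hra (by positivity : (0:ℝ) ≤ ε/2)
        have h2 := mul_le_mul_of_nonneg_left hrb (by positivity : (0:ℝ) ≤ ε/2)
        linarith
    _ = ε * ‖w' - w‖ := by ring




lemma rhombus_segment (α c : ℝ) (hα : 0 < α) (f : ℂ → ℂ)
    (hf : DifferentiableOn ℂ f {z : ℂ | |z.re| + α * |z.im| < c})
    (p q : ℂ) (hp : p ∈ {z : ℂ | |z.re| + α * |z.im| < c})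
    (hq : q ∈ {z : ℂ | |z.re| + α * |z.im| < c}) :
    (q - p) * ∫ τ in (0:ℝ)..1, f (p + ↑τ * (q - p)) =
      (fun w : ℂ => (∫ x in (0:ℝ)..w.re, f x) +
        Complex.I * ∫ y in (0:ℝ)..w.im, f (w.re + y * Complex.I)) q -
      (fun w : ℂ => (∫ x in (0:ℝ)..w.re, f x) +
        Complex.I * ∫ y in (0:ℝ)..w.im, f (w.re + y * Complex.I)) p := by
  set U := {z : ℂ | |z.re| + α * |z.im| < c} with hUdef
  set F := fun w : ℂ => (∫ x in (0:ℝ)..w.re, f x) +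
        Complex.I * ∫ y in (0:ℝ)..w.im, f (w.re + y * Complex.I) with hFdef
  have hF := rhombus_hasDerivAt α c hα f hf
  set γ := fun τ : ℝ => p + ↑τ * (q - p) with hγdef
  have hmem : ∀ τ ∈ Set.uIcc (0:ℝ) 1, γ τ ∈ U := by
    intro τ hτ
    rw [Set.uIcc_of_le (by norm_num), Set.mem_Icc] at hτ
    have := (convex_rhombus α c hα.le) hp hq (by linarith : (0:ℝ) ≤ 1 - τ) hτ.1 (by ring)
    convert this using 1
    simp only [hγdef]
    push_cast
    rw [Complex.real_smul, Complex.real_smul]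
    push_cast
    ring
  have hderiv : ∀ τ ∈ Set.uIcc (0:ℝ) 1, HasDerivAt (F ∘ γ) ((q - p) • f (γ τ)) τ := by
    intro τ hτ
    have hγd : HasDerivAt γ (q - p) τ := by
      have h1 : HasDerivAt (fun τ : ℝ => (↑τ : ℂ)) 1 τ := by
        simpa using (hasDerivAt_id τ).ofReal_comp
      have h2 := (h1.mul_const (q - p)).const_add p; rw [one_mul] at h2; exact h2
    exact (hF (γ τ) (hmem τ hτ)).scomp τ hγd
  have hcont : ContinuousOn (fun τ : ℝ => (q - p) • f (γ τ)) (Set.uIcc (0:ℝ) 1) := by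
    refine ContinuousOn.smul (f := fun _ : ℝ => q - p) (g := fun τ => f (γ τ)) continuousOn_const ?_
    apply hf.continuousOn.comp _ hmem
    exact (continuous_const.add (Complex.continuous_ofReal.mul continuous_const)).continuousOn
  have := intervalIntegral.integral_eq_sub_of_hasDerivAt hderiv
    (hcont.intervalIntegrable)
  rw [intervalIntegral.integral_smul] at this
  simp only [Function.comp_apply] at this
  have hγ1 : γ 1 = q := by simp [hγdef]
  have hγ0 : γ 0 = p := by simp [hγdef]
  rw [hγ1, hγ0, smul_eq_mul] at this
  exact this

lemma rhombus_wedge (α c : ℝ) (hα : 0 < α) (f : ℂ → ℂ)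
    (hf : DifferentiableOn ℂ f {z : ℂ | |z.re| + α * |z.im| < c})
    (z : ℂ) (h1 : (1:ℂ) ∈ {z : ℂ | |z.re| + α * |z.im| < c})
    (hm1 : (-1:ℂ) ∈ {z : ℂ | |z.re| + α * |z.im| < c})
    (hz : z ∈ {z : ℂ | |z.re| + α * |z.im| < c}) :
    ∫ x in (-1:ℝ)..1, f ↑x =
      (z + 1) * (∫ τ in (0:ℝ)..1, f (-1 + ↑τ * (z + 1))) +
      (1 - z) * ∫ τ in (0:ℝ)..1, f (z + ↑τ * (1 - z)) := by
  have E1 := rhombus_segment α c hα f hf (-1) 1 hm1 h1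
  have E2 := rhombus_segment α c hα f hf (-1) z hm1 hz
  have E3 := rhombus_segment α c hα f hf z 1 hz h1
  have hsub : ∫ x in (-1:ℝ)..1, f ↑x = (1 - (-1:ℂ)) * ∫ τ in (0:ℝ)..1, f (-1 + ↑τ * (1 - -1)) := by
    have h := intervalIntegral.integral_comp_mul_add (a := (0:ℝ)) (b := 1)
      (fun x : ℝ => f ↑x) (two_ne_zero) (-1)
    norm_num at h
    have e : (∫ τ in (0:ℝ)..1, f (-1 + ↑τ * (1 - -1))) = ∫ x in (0:ℝ)..1, f (2 * ↑x + -1) := by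
      apply intervalIntegral.integral_congr
      intro τ _
      congr 1
      push_cast
      ring
    rw [e, h]
    push_cast
    ring
  rw [hsub]
  have : z - -1 = z + 1 := by ring
  rw [this] at E2
  linear_combination E1 - E2 - E3






noncomputable def rseq (n : ℕ) : ℝ := (n + 1 : ℝ) / (n + 2)

lemma rseq_mem (n : ℕ) : 0 < rseq n ∧ rseq n < 1 := by
  constructor
  · apply div_pos <;> positivity
  · rw [rseq, div_lt_one (by positivity)]; linarith

lemma rseq_tendsto : Tendsto rseq atTop (𝓝 1) := by
  have := (tendsto_natCast_div_add_atTop (1:ℝ)).comp (tendsto_add_atTop_nat 1)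
  refine this.congr fun n => ?_
  simp only [Function.comp_apply, rseq]
  push_cast; ring_nf

lemma compact_rhombus_le (α : ℝ) (hα : 1 ≤ α) :
    IsCompact {z : ℂ | |z.re| + α * |z.im| ≤ 1} := by
  apply (isCompact_closedBall (0:ℂ) 1).of_isClosed_subset
  · exact isClosed_le (by fun_prop) continuous_const
  · intro z hz
    simp only [mem_setOf_eq] at hz
    simp only [Metric.mem_closedBall, dist_zero_right]
    have h1 := Complex.norm_le_abs_re_add_abs_im z
    have h2 : |z.im| ≤ α * |z.im| := le_mul_of_one_le_left (abs_nonneg _) hα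
    calc ‖z‖ ≤ |z.re| + |z.im| := h1
      _ ≤ |z.re| + α * |z.im| := by linarith
      _ ≤ 1 := hz

lemma convex_rhombus_le (α : ℝ) (hα : 1 < α) :
    Convex ℝ {z : ℂ | |z.re| + α * |z.im| ≤ 1} := by
  rw [← closure_rhombus α (by linarith)]
  exact (convex_rhombus α 1 (by linarith)).closure

lemma tendsto_scaled_integral (α : ℝ) (hα : 1 < α) (f : ℂ → ℂ)
    (hfc : ContinuousOn f {z : ℂ | |z.re| + α * |z.im| ≤ 1})
    (p q : ℝ) (hpq : p ≤ q) (γ : ℝ → ℂ) (hγcont : Continuous γ)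
    (hγmem : ∀ τ ∈ Set.Icc p q, |(γ τ).re| + α * |(γ τ).im| ≤ 1) :
    Tendsto (fun n => ∫ τ in p..q, f (↑(rseq n) * γ τ)) atTop
      (𝓝 (∫ τ in p..q, f (γ τ))) := by
  set K := {z : ℂ | |z.re| + α * |z.im| ≤ 1} with hK
  obtain ⟨C, hC⟩ := (compact_rhombus_le α hα.le).exists_bound_of_continuousOn hfc
  have hmemK : ∀ (n : ℕ) (τ : ℝ), τ ∈ Set.Icc p q → (↑(rseq n) * γ τ) ∈ K := by
    intro n τ hτ
    have h1 : (↑(rseq n) : ℂ) * γ τ = rseq n • γ τ := Complex.real_smul.symm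
    have h2 : (0:ℝ) ≤ |(γ τ).re| + α * |(γ τ).im| :=
      add_nonneg (abs_nonneg _) (mul_nonneg (by linarith) (abs_nonneg _))
    have h3 := mul_le_mul (rseq_mem n).2.le (hγmem τ hτ) h2 zero_le_one
    simp only [hK, mem_setOf_eq]
    rw [h1, rhN_smul α _ (rseq_mem n).1.le]
    simpa using h3
  rw [intervalIntegral.integral_of_le hpq]
  have h2 : ∀ n, ∫ τ in p..q, f (↑(rseq n) * γ τ)
      = ∫ τ in Set.Ioc p q, f (↑(rseq n) * γ τ) := fun n =>
    intervalIntegral.integral_of_le hpq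
  simp_rw [h2]
  apply MeasureTheory.tendsto_integral_of_dominated_convergence (fun _ => C)
  · intro n
    have hcont : ContinuousOn (fun τ => f (↑(rseq n) * γ τ)) (Set.Icc p q) :=
      hfc.comp ((continuous_const.mul hγcont).continuousOn) (fun τ hτ => hmemK n τ hτ)
    exact (hcont.aestronglyMeasurable measurableSet_Icc).mono_measure
      (Measure.restrict_mono Set.Ioc_subset_Icc_self le_rfl)
  · exact integrable_const C
  · intro n
    filter_upwards [ae_restrict_mem measurableSet_Ioc] with τ hτ
    exact hC _ (hmemK n τ (Set.Ioc_subset_Icc_self hτ))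
  · filter_upwards [ae_restrict_mem measurableSet_Ioc] with τ hτ
    have hτ' := Set.Ioc_subset_Icc_self hτ
    have hmem : γ τ ∈ K := hγmem τ hτ'
    have hcw : ContinuousWithinAt f K (γ τ) := hfc (γ τ) hmem
    apply hcw.tendsto.comp
    apply tendsto_nhdsWithin_of_tendsto_nhds_of_eventually_within
    · have h1 : Tendsto (fun n => ((rseq n : ℝ) : ℂ)) atTop (𝓝 1) :=
        (Complex.continuous_ofReal.tendsto 1).comp rseq_tendsto
      simpa using h1.mul_const (γ τ)
    · exact Eventually.of_forall fun n => hmemK n τ hτ'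

lemma wedge_closure (α : ℝ) (hα : 1 < α) (f : ℂ → ℂ)
    (hfd : DifferentiableOn ℂ f {z : ℂ | |z.re| + α * |z.im| < 1})
    (hfc : ContinuousOn f {z : ℂ | |z.re| + α * |z.im| ≤ 1})
    (z : ℂ) (hz : |z.re| + α * |z.im| ≤ 1) :
    ∫ x in (-1:ℝ)..1, f ↑x =
      (z + 1) * (∫ τ in (0:ℝ)..1, f (-1 + ↑τ * (z + 1))) +
      (1 - z) * ∫ τ in (0:ℝ)..1, f (z + ↑τ * (1 - z)) := by
  have hαpos : (0:ℝ) < α := by linarith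
  have hm1 : |(-1:ℂ).re| + α * |(-1:ℂ).im| ≤ 1 := by
    simp
  have hp1 : |(1:ℂ).re| + α * |(1:ℂ).im| ≤ 1 := by
    simp
  -- the identity for each n
  have identity : ∀ n : ℕ,
      (∫ x in (-1:ℝ)..1, f (↑(rseq n) * ↑x)) =
        (z + 1) * (∫ τ in (0:ℝ)..1, f (↑(rseq n) * (-1 + ↑τ * (z + 1)))) +
        (1 - z) * ∫ τ in (0:ℝ)..1, f (↑(rseq n) * (z + ↑τ * (1 - z))) := by
    intro n
    obtain ⟨hr0, hr1⟩ := rseq_mem n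
    have hinv : 1 < (rseq n)⁻¹ := (one_lt_inv₀ hr0).mpr hr1
    have hmaps : ∀ w : ℂ, w ∈ {z : ℂ | |z.re| + α * |z.im| < (rseq n)⁻¹} →
        (↑(rseq n) * w) ∈ {z : ℂ | |z.re| + α * |z.im| < 1} := by
      intro w hw
      simp only [mem_setOf_eq] at hw ⊢
      rw [show (↑(rseq n) : ℂ) * w = rseq n • w from Complex.real_smul,
        rhN_smul α _ hr0.le]
      calc rseq n * (|w.re| + α * |w.im|) < rseq n * (rseq n)⁻¹ :=
          mul_lt_mul_of_pos_left hw hr0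
        _ = 1 := mul_inv_cancel₀ hr0.ne'
    have hg : DifferentiableOn ℂ (fun w => f (↑(rseq n) * w))
        {z : ℂ | |z.re| + α * |z.im| < (rseq n)⁻¹} := by
      apply DifferentiableOn.comp hfd
        ((differentiable_const _ |>.mul differentiable_id).differentiableOn)
      exact hmaps
    exact rhombus_wedge α (rseq n)⁻¹ hαpos _ hg z
      (by simpa using hinv) (by simpa using hinv)
      (by exact lt_of_le_of_lt hz hinv)
  -- limits
  have hconv := convex_rhombus_le α hα
  have hLHS := tendsto_scaled_integral α hα f hfc (-1) 1 (by norm_num)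
    (fun τ => (↑τ : ℂ)) Complex.continuous_ofReal (by
      intro τ hτ
      rw [Set.mem_Icc] at hτ
      simpa using abs_le.mpr hτ)
  have hmemA : ∀ τ ∈ Set.Icc (0:ℝ) 1,
      |((-1:ℂ) + ↑τ * (z + 1)).re| + α * |((-1:ℂ) + ↑τ * (z + 1)).im| ≤ 1 := by
    intro τ hτ
    rw [Set.mem_Icc] at hτ
    have hmem := hconv hm1 hz (by linarith : (0:ℝ) ≤ 1 - τ) hτ.1 (by ring)
    rw [mem_setOf_eq] at hmem
    have hpt : (-1 : ℂ) + ↑τ * (z + 1) = (1 - τ) • (-1 : ℂ) + τ • z := by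
      rw [Complex.real_smul, Complex.real_smul]; push_cast; ring
    rw [hpt]; exact hmem
  have hmemB : ∀ τ ∈ Set.Icc (0:ℝ) 1,
      |(z + ↑τ * (1 - z)).re| + α * |(z + ↑τ * (1 - z)).im| ≤ 1 := by
    intro τ hτ
    rw [Set.mem_Icc] at hτ
    have hmem := hconv hz hp1 (by linarith : (0:ℝ) ≤ 1 - τ) hτ.1 (by ring)
    rw [mem_setOf_eq] at hmem
    have hpt : z + ↑τ * (1 - z) = (1 - τ) • z + τ • (1 : ℂ) := by
      rw [Complex.real_smul, Complex.real_smul]; push_cast; ring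
    rw [hpt]; exact hmem
  have hA := tendsto_scaled_integral α hα f hfc 0 1 (by norm_num)
    (fun τ => -1 + ↑τ * (z + 1))
    (continuous_const.add (Complex.continuous_ofReal.mul continuous_const)) hmemA
  have hB := tendsto_scaled_integral α hα f hfc 0 1 (by norm_num)
    (fun τ => z + ↑τ * (1 - z))
    (continuous_const.add (Complex.continuous_ofReal.mul continuous_const)) hmemB
  have hsum := (hA.const_mul (z+1)).add (hB.const_mul (1-z))
  exact tendsto_nhds_unique hLHS (hsum.congr (fun n => (identity n).symm))


set_option maxHeartbeats 1000000 in
lemma side_estimate (α t M : ℝ) (hα : 1 < α) (ht : 0 < t) (hM : 0 ≤ M) (ζ : ℂ)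
    (hζ : α * |ζ.im| ≤ |ζ.re|) (h : ℝ → ℂ) (hc : ContinuousOn h (Set.Icc 0 1))
    (hbd : ∀ τ ∈ Set.Icc (0:ℝ) 1, ‖h τ‖ ≤ M) :
    ‖ζ * ∫ τ in (0:ℝ)..1,
        (1 / Real.sqrt (4 * π * t) : ℂ) *
          Complex.exp (-(((1 - τ : ℝ) : ℂ) * ζ) ^ 2 / (4 * (t:ℂ))) * h τ‖
      ≤ M / 2 * Real.sqrt ((α ^ 2 + 1) / (α ^ 2 - 1)) := by
  have hαpos : (0:ℝ) < α := by linarith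
  have hRHSnn : 0 ≤ M / 2 * Real.sqrt ((α ^ 2 + 1) / (α ^ 2 - 1)) := by positivity
  by_cases hζ0 : ζ.re = 0
  · have him : ζ.im = 0 := by
      rw [hζ0] at hζ
      simp only [abs_zero] at hζ
      have h1 : 0 ≤ |ζ.im| := abs_nonneg _
      have h2 : |ζ.im| ≤ 0 := by nlinarith
      simpa using le_antisymm h2 h1
    have hz : ζ = 0 := Complex.ext hζ0 him
    rw [hz]
    simpa using hRHSnn
  -- main case
  have hA : 0 < |ζ.re| := abs_pos.mpr hζ0
  have hre2 : 0 < ζ.re ^ 2 := by positivity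
  set k := (α ^ 2 - 1) / α ^ 2 with hkdef
  have hkpos : 0 < k := by
    apply div_pos (by nlinarith) (by positivity)
  set c₁ := k * ζ.re ^ 2 / (4 * t) with hc₁def
  have hc₁pos : 0 < c₁ := by positivity
  have hsq : Real.sqrt (4 * π * t) > 0 := Real.sqrt_pos.mpr (by positivity)
  -- pointwise bound on the integrand norm
  have hptwise : ∀ τ ∈ Set.Icc (0:ℝ) 1,
      ‖(1 / Real.sqrt (4 * π * t) : ℂ) *
          Complex.exp (-(((1 - τ : ℝ) : ℂ) * ζ) ^ 2 / (4 * (t:ℂ))) * h τ‖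
      ≤ M / Real.sqrt (4 * π * t) * Real.exp (-c₁ * (1 - τ) ^ 2) := by
    intro τ hτ
    rw [norm_mul, norm_mul]
    have e1 : ‖(1 / Real.sqrt (4 * π * t) : ℂ)‖ = 1 / Real.sqrt (4 * π * t) := by
      rw [norm_div, norm_one]
      rw [Complex.norm_real, Real.norm_eq_abs, _root_.abs_of_nonneg (Real.sqrt_nonneg _)]
    have e2 : ‖Complex.exp (-(((1 - τ : ℝ) : ℂ) * ζ) ^ 2 / (4 * (t:ℂ)))‖
        ≤ Real.exp (-c₁ * (1 - τ) ^ 2) := by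
      have harg : (-(((1 - τ : ℝ) : ℂ) * ζ) ^ 2 / (4 * (t:ℂ)))
          = ((-(1 - τ) ^ 2 / (4 * t) : ℝ) : ℂ) * ζ ^ 2 := by
        push_cast
        field_simp
      show ‖_‖ ≤ _
      rw [Complex.norm_exp, harg]
      apply Real.exp_le_exp.mpr
      rw [Complex.re_ofReal_mul]
      have hresq : (ζ ^ 2).re = ζ.re ^ 2 - ζ.im ^ 2 := by
        rw [sq, Complex.mul_re]; ring
      rw [hresq]
      have him2 : ζ.im ^ 2 ≤ ζ.re ^ 2 / α ^ 2 := by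
        have := mul_self_le_mul_self (by positivity : (0:ℝ) ≤ α * |ζ.im|) hζ
        rw [le_div_iff₀ (by positivity : (0:ℝ) < α ^ 2)]
        nlinarith [_root_.sq_abs ζ.im, _root_.sq_abs ζ.re]
      have hkey : k * ζ.re ^ 2 ≤ ζ.re ^ 2 - ζ.im ^ 2 := by
        rw [hkdef]
        have : (α ^ 2 - 1) / α ^ 2 * ζ.re ^ 2 = ζ.re ^ 2 - ζ.re ^ 2 / α ^ 2 := by
          field_simp
        rw [this]
        linarith
      have hineq : -((1 - τ) ^ 2) * (ζ.re ^ 2 - ζ.im ^ 2) ≤ -(k * ζ.re ^ 2) * (1 - τ) ^ 2 := by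
        nlinarith [hkey, sq_nonneg (1 - τ)]
      have h4t : (0:ℝ) < 4 * t := by linarith
      calc -(1 - τ) ^ 2 / (4 * t) * (ζ.re ^ 2 - ζ.im ^ 2)
          = -((1 - τ) ^ 2) * (ζ.re ^ 2 - ζ.im ^ 2) / (4 * t) := by ring
        _ ≤ -(k * ζ.re ^ 2) * (1 - τ) ^ 2 / (4 * t) := by
            rw [div_le_div_iff₀ h4t h4t]
            nlinarith [hineq, h4t]
        _ = -c₁ * (1 - τ) ^ 2 := by rw [hc₁def]; ring
    have e3 : ‖h τ‖ ≤ M := by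
      exact hbd τ hτ
    calc ‖(1 / Real.sqrt (4 * π * t) : ℂ)‖ *
          ‖Complex.exp (-(((1 - τ : ℝ) : ℂ) * ζ) ^ 2 / (4 * (t:ℂ)))‖ * ‖h τ‖
        ≤ (1 / Real.sqrt (4 * π * t)) * Real.exp (-c₁ * (1 - τ) ^ 2) * M := by
          rw [e1]
          apply mul_le_mul _ e3 (norm_nonneg _) (by positivity)
          exact mul_le_mul_of_nonneg_left e2 (by positivity)
      _ = M / Real.sqrt (4 * π * t) * Real.exp (-c₁ * (1 - τ) ^ 2) := by ring
  -- bound the integral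
  have hFcont : ContinuousOn (fun τ : ℝ =>
      (1 / Real.sqrt (4 * π * t) : ℂ) *
        Complex.exp (-(((1 - τ : ℝ) : ℂ) * ζ) ^ 2 / (4 * (t:ℂ))) * h τ) (Set.Icc 0 1) := by
    apply ContinuousOn.mul _ hc
    apply Continuous.continuousOn
    fun_prop
  have hIbound : ‖∫ τ in (0:ℝ)..1,
      (1 / Real.sqrt (4 * π * t) : ℂ) *
        Complex.exp (-(((1 - τ : ℝ) : ℂ) * ζ) ^ 2 / (4 * (t:ℂ))) * h τ‖
      ≤ M / Real.sqrt (4 * π * t) * (Real.sqrt (π / c₁) / 2) := by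
    calc ‖∫ τ in (0:ℝ)..1, _‖ ≤ ∫ τ in (0:ℝ)..1,
          ‖(1 / Real.sqrt (4 * π * t) : ℂ) *
            Complex.exp (-(((1 - τ : ℝ) : ℂ) * ζ) ^ 2 / (4 * (t:ℂ))) * h τ‖ :=
        by
           exact intervalIntegral.norm_integral_le_integral_norm zero_le_one
      _ ≤ ∫ τ in (0:ℝ)..1, M / Real.sqrt (4 * π * t) * Real.exp (-c₁ * (1 - τ) ^ 2) := by
          apply intervalIntegral.integral_mono_on zero_le_one
          · exact (hFcont.norm).intervalIntegrable_of_Icc zero_le_one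
          · apply Continuous.intervalIntegrable
            fun_prop
          · exact hptwise
      _ = M / Real.sqrt (4 * π * t) * ∫ τ in (0:ℝ)..1, Real.exp (-c₁ * (1 - τ) ^ 2) := by
          rw [intervalIntegral.integral_const_mul]
      _ ≤ M / Real.sqrt (4 * π * t) * (Real.sqrt (π / c₁) / 2) := by
          apply mul_le_mul_of_nonneg_left _ (by positivity)
          have hsub : (∫ τ in (0:ℝ)..1, Real.exp (-c₁ * (1 - τ) ^ 2))
              = ∫ u in (0:ℝ)..1, Real.exp (-c₁ * u ^ 2) := by
            have := intervalIntegral.integral_comp_sub_left (a := (0:ℝ)) (b := 1)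
              (fun u : ℝ => Real.exp (-c₁ * u ^ 2)) 1
            norm_num at this ⊢
            exact this
          rw [hsub]
          rw [← integral_gaussian_Ioi c₁]
          rw [intervalIntegral.integral_of_le zero_le_one]
          apply MeasureTheory.setIntegral_mono_set
          · exact (integrable_exp_neg_mul_sq hc₁pos).integrableOn
          · filter_upwards with x using Real.exp_nonneg _
          · filter_upwards with x
            intro hx
            exact Set.mem_Ioi.mpr hx.1
  -- the modulus of ζ
  have hzeta : ‖ζ‖ ≤ |ζ.re| * Real.sqrt (α ^ 2 + 1) / α := by
    have hform : |ζ.re| * Real.sqrt (α ^ 2 + 1) / α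
        = Real.sqrt (ζ.re ^ 2 * (α ^ 2 + 1) / α ^ 2) := by
      rw [show ζ.re ^ 2 * (α ^ 2 + 1) / α ^ 2
          = (|ζ.re| * Real.sqrt (α ^ 2 + 1) / α) ^ 2 by
        rw [div_pow, mul_pow, Real.sq_sqrt (by positivity), _root_.sq_abs]]
      rw [Real.sqrt_sq (by positivity)]
    rw [hform, Complex.norm_def, Complex.normSq_apply]
    apply Real.sqrt_le_sqrt
    have him2 : ζ.im ^ 2 ≤ ζ.re ^ 2 / α ^ 2 := by
      have := mul_self_le_mul_self (by positivity : (0:ℝ) ≤ α * |ζ.im|) hζ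
      rw [le_div_iff₀ (by positivity : (0:ℝ) < α ^ 2)]
      nlinarith [_root_.sq_abs ζ.im, _root_.sq_abs ζ.re]
    have : ζ.re ^ 2 * (α ^ 2 + 1) / α ^ 2 = ζ.re ^ 2 + ζ.re ^ 2 / α ^ 2 := by
      field_simp
    nlinarith [sq_nonneg ζ.re, sq_nonneg ζ.im]
  -- put everything together
  rw [norm_mul]
  have hne1 : α ≠ 0 := hαpos.ne'
  have hne2 : (α ^ 2 - 1) ≠ 0 := by nlinarith
  have hne3 : t ≠ 0 := ht.ne'
  have hne4 : ζ.re ≠ 0 := hζ0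
  have hsqrtval : Real.sqrt (π / c₁)
      = Real.sqrt (4 * π * t) * α / (Real.sqrt (α ^ 2 - 1) * |ζ.re|) := by
    have hval : π / c₁ = (Real.sqrt (4 * π * t) * α / (Real.sqrt (α ^ 2 - 1) * |ζ.re|)) ^ 2 := by
      rw [div_pow, mul_pow, mul_pow, Real.sq_sqrt (by positivity),
        Real.sq_sqrt (by nlinarith : (0:ℝ) ≤ α ^ 2 - 1), _root_.sq_abs, hc₁def, hkdef]
      field_simp
    rw [hval, Real.sqrt_sq (by positivity)]
  calc ‖ζ‖ * ‖∫ τ in (0:ℝ)..1,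
        (1 / Real.sqrt (4 * π * t) : ℂ) *
          Complex.exp (-(((1 - τ : ℝ) : ℂ) * ζ) ^ 2 / (4 * (t:ℂ))) * h τ‖
      ≤ (|ζ.re| * Real.sqrt (α ^ 2 + 1) / α) *
        (M / Real.sqrt (4 * π * t) * (Real.sqrt (π / c₁) / 2)) := by
        apply mul_le_mul hzeta hIbound (norm_nonneg _) (by positivity)
    _ = M / 2 * Real.sqrt ((α ^ 2 + 1) / (α ^ 2 - 1)) := by
        rw [hsqrtval, Real.sqrt_div (by positivity : (0:ℝ) ≤ α ^ 2 + 1)]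
        have h1 : Real.sqrt (α ^ 2 - 1) > 0 := Real.sqrt_pos.mpr (by nlinarith)
        field_simp

set_option maxHeartbeats 1000000 in
lemma side_estimate' (α t M : ℝ) (hα : 1 < α) (ht : 0 < t) (hM : 0 ≤ M) (ζ : ℂ)
    (hζ : α * |ζ.im| ≤ |ζ.re|) (h : ℝ → ℂ) (hc : ContinuousOn h (Set.Icc 0 1))
    (hbd : ∀ τ ∈ Set.Icc (0:ℝ) 1, ‖h τ‖ ≤ M) :
    ‖ζ * ∫ τ in (0:ℝ)..1,
        (1 / Real.sqrt (4 * π * t) : ℂ) *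
          Complex.exp (-(((τ : ℝ) : ℂ) * ζ) ^ 2 / (4 * (t:ℂ))) * h τ‖
      ≤ M / 2 * Real.sqrt ((α ^ 2 + 1) / (α ^ 2 - 1)) := by
  have hαpos : (0:ℝ) < α := by linarith
  have hRHSnn : 0 ≤ M / 2 * Real.sqrt ((α ^ 2 + 1) / (α ^ 2 - 1)) := by positivity
  by_cases hζ0 : ζ.re = 0
  · have him : ζ.im = 0 := by
      rw [hζ0] at hζ
      simp only [abs_zero] at hζ
      have h1 : 0 ≤ |ζ.im| := abs_nonneg _
      have h2 : |ζ.im| ≤ 0 := by nlinarith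
      simpa using le_antisymm h2 h1
    have hz : ζ = 0 := Complex.ext hζ0 him
    rw [hz]
    simpa using hRHSnn
  -- main case
  have hA : 0 < |ζ.re| := abs_pos.mpr hζ0
  have hre2 : 0 < ζ.re ^ 2 := by positivity
  set k := (α ^ 2 - 1) / α ^ 2 with hkdef
  have hkpos : 0 < k := by
    apply div_pos (by nlinarith) (by positivity)
  set c₁ := k * ζ.re ^ 2 / (4 * t) with hc₁def
  have hc₁pos : 0 < c₁ := by positivity
  have hsq : Real.sqrt (4 * π * t) > 0 := Real.sqrt_pos.mpr (by positivity)
  -- pointwise bound on the integrand norm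
  have hptwise : ∀ τ ∈ Set.Icc (0:ℝ) 1,
      ‖(1 / Real.sqrt (4 * π * t) : ℂ) *
          Complex.exp (-(((τ : ℝ) : ℂ) * ζ) ^ 2 / (4 * (t:ℂ))) * h τ‖
      ≤ M / Real.sqrt (4 * π * t) * Real.exp (-c₁ * τ ^ 2) := by
    intro τ hτ
    rw [norm_mul, norm_mul]
    have e1 : ‖(1 / Real.sqrt (4 * π * t) : ℂ)‖ = 1 / Real.sqrt (4 * π * t) := by
      rw [norm_div, norm_one]
      rw [Complex.norm_real, Real.norm_eq_abs, _root_.abs_of_nonneg (Real.sqrt_nonneg _)]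
    have e2 : ‖Complex.exp (-(((τ : ℝ) : ℂ) * ζ) ^ 2 / (4 * (t:ℂ)))‖
        ≤ Real.exp (-c₁ * τ ^ 2) := by
      have harg : (-(((τ : ℝ) : ℂ) * ζ) ^ 2 / (4 * (t:ℂ)))
          = ((-τ ^ 2 / (4 * t) : ℝ) : ℂ) * ζ ^ 2 := by
        push_cast
        field_simp
      show ‖_‖ ≤ _
      rw [Complex.norm_exp, harg]
      apply Real.exp_le_exp.mpr
      rw [Complex.re_ofReal_mul]
      have hresq : (ζ ^ 2).re = ζ.re ^ 2 - ζ.im ^ 2 := by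
        rw [sq, Complex.mul_re]; ring
      rw [hresq]
      have him2 : ζ.im ^ 2 ≤ ζ.re ^ 2 / α ^ 2 := by
        have := mul_self_le_mul_self (by positivity : (0:ℝ) ≤ α * |ζ.im|) hζ
        rw [le_div_iff₀ (by positivity : (0:ℝ) < α ^ 2)]
        nlinarith [_root_.sq_abs ζ.im, _root_.sq_abs ζ.re]
      have hkey : k * ζ.re ^ 2 ≤ ζ.re ^ 2 - ζ.im ^ 2 := by
        rw [hkdef]
        have : (α ^ 2 - 1) / α ^ 2 * ζ.re ^ 2 = ζ.re ^ 2 - ζ.re ^ 2 / α ^ 2 := by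
          field_simp
        rw [this]
        linarith
      have hineq : -(τ ^ 2) * (ζ.re ^ 2 - ζ.im ^ 2) ≤ -(k * ζ.re ^ 2) * τ ^ 2 := by
        nlinarith [hkey, sq_nonneg τ]
      have h4t : (0:ℝ) < 4 * t := by linarith
      calc -τ ^ 2 / (4 * t) * (ζ.re ^ 2 - ζ.im ^ 2)
          = -(τ ^ 2) * (ζ.re ^ 2 - ζ.im ^ 2) / (4 * t) := by ring
        _ ≤ -(k * ζ.re ^ 2) * τ ^ 2 / (4 * t) := by
            rw [div_le_div_iff₀ h4t h4t]
            nlinarith [hineq, h4t]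
        _ = -c₁ * τ ^ 2 := by rw [hc₁def]; ring
    have e3 : ‖h τ‖ ≤ M := by
      exact hbd τ hτ
    calc ‖(1 / Real.sqrt (4 * π * t) : ℂ)‖ *
          ‖Complex.exp (-(((τ : ℝ) : ℂ) * ζ) ^ 2 / (4 * (t:ℂ)))‖ * ‖h τ‖
        ≤ (1 / Real.sqrt (4 * π * t)) * Real.exp (-c₁ * τ ^ 2) * M := by
          rw [e1]
          apply mul_le_mul _ e3 (norm_nonneg _) (by positivity)
          exact mul_le_mul_of_nonneg_left e2 (by positivity)
      _ = M / Real.sqrt (4 * π * t) * Real.exp (-c₁ * τ ^ 2) := by ring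
  -- bound the integral
  have hFcont : ContinuousOn (fun τ : ℝ =>
      (1 / Real.sqrt (4 * π * t) : ℂ) *
        Complex.exp (-(((τ : ℝ) : ℂ) * ζ) ^ 2 / (4 * (t:ℂ))) * h τ) (Set.Icc 0 1) := by
    apply ContinuousOn.mul _ hc
    apply Continuous.continuousOn
    fun_prop
  have hIbound : ‖∫ τ in (0:ℝ)..1,
      (1 / Real.sqrt (4 * π * t) : ℂ) *
        Complex.exp (-(((τ : ℝ) : ℂ) * ζ) ^ 2 / (4 * (t:ℂ))) * h τ‖
      ≤ M / Real.sqrt (4 * π * t) * (Real.sqrt (π / c₁) / 2) := by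
    calc ‖∫ τ in (0:ℝ)..1, _‖ ≤ ∫ τ in (0:ℝ)..1,
          ‖(1 / Real.sqrt (4 * π * t) : ℂ) *
            Complex.exp (-(((τ : ℝ) : ℂ) * ζ) ^ 2 / (4 * (t:ℂ))) * h τ‖ :=
        by
           exact intervalIntegral.norm_integral_le_integral_norm zero_le_one
      _ ≤ ∫ τ in (0:ℝ)..1, M / Real.sqrt (4 * π * t) * Real.exp (-c₁ * τ ^ 2) := by
          apply intervalIntegral.integral_mono_on zero_le_one
          · exact (hFcont.norm).intervalIntegrable_of_Icc zero_le_one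
          · apply Continuous.intervalIntegrable
            fun_prop
          · exact hptwise
      _ = M / Real.sqrt (4 * π * t) * ∫ τ in (0:ℝ)..1, Real.exp (-c₁ * τ ^ 2) := by
          rw [intervalIntegral.integral_const_mul]
      _ ≤ M / Real.sqrt (4 * π * t) * (Real.sqrt (π / c₁) / 2) := by
          apply mul_le_mul_of_nonneg_left _ (by positivity)
          rw [← integral_gaussian_Ioi c₁]
          rw [intervalIntegral.integral_of_le zero_le_one]
          apply MeasureTheory.setIntegral_mono_set
          · exact (integrable_exp_neg_mul_sq hc₁pos).integrableOn
          · filter_upwards with x using Real.exp_nonneg _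
          · filter_upwards with x
            intro hx
            exact Set.mem_Ioi.mpr hx.1
  -- the modulus of ζ
  have hzeta : ‖ζ‖ ≤ |ζ.re| * Real.sqrt (α ^ 2 + 1) / α := by
    have hform : |ζ.re| * Real.sqrt (α ^ 2 + 1) / α
        = Real.sqrt (ζ.re ^ 2 * (α ^ 2 + 1) / α ^ 2) := by
      rw [show ζ.re ^ 2 * (α ^ 2 + 1) / α ^ 2
          = (|ζ.re| * Real.sqrt (α ^ 2 + 1) / α) ^ 2 by
        rw [div_pow, mul_pow, Real.sq_sqrt (by positivity), _root_.sq_abs]]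
      rw [Real.sqrt_sq (by positivity)]
    rw [hform, Complex.norm_def, Complex.normSq_apply]
    apply Real.sqrt_le_sqrt
    have him2 : ζ.im ^ 2 ≤ ζ.re ^ 2 / α ^ 2 := by
      have := mul_self_le_mul_self (by positivity : (0:ℝ) ≤ α * |ζ.im|) hζ
      rw [le_div_iff₀ (by positivity : (0:ℝ) < α ^ 2)]
      nlinarith [_root_.sq_abs ζ.im, _root_.sq_abs ζ.re]
    have : ζ.re ^ 2 * (α ^ 2 + 1) / α ^ 2 = ζ.re ^ 2 + ζ.re ^ 2 / α ^ 2 := by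
      field_simp
    nlinarith [sq_nonneg ζ.re, sq_nonneg ζ.im]
  -- put everything together
  rw [norm_mul]
  have hne1 : α ≠ 0 := hαpos.ne'
  have hne2 : (α ^ 2 - 1) ≠ 0 := by nlinarith
  have hne3 : t ≠ 0 := ht.ne'
  have hne4 : ζ.re ≠ 0 := hζ0
  have hsqrtval : Real.sqrt (π / c₁)
      = Real.sqrt (4 * π * t) * α / (Real.sqrt (α ^ 2 - 1) * |ζ.re|) := by
    have hval : π / c₁ = (Real.sqrt (4 * π * t) * α / (Real.sqrt (α ^ 2 - 1) * |ζ.re|)) ^ 2 := by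
      rw [div_pow, mul_pow, mul_pow, Real.sq_sqrt (by positivity),
        Real.sq_sqrt (by nlinarith : (0:ℝ) ≤ α ^ 2 - 1), _root_.sq_abs, hc₁def, hkdef]
      field_simp
    rw [hval, Real.sqrt_sq (by positivity)]
  calc ‖ζ‖ * ‖∫ τ in (0:ℝ)..1,
        (1 / Real.sqrt (4 * π * t) : ℂ) *
          Complex.exp (-(((τ : ℝ) : ℂ) * ζ) ^ 2 / (4 * (t:ℂ))) * h τ‖
      ≤ (|ζ.re| * Real.sqrt (α ^ 2 + 1) / α) *
        (M / Real.sqrt (4 * π * t) * (Real.sqrt (π / c₁) / 2)) := by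
        apply mul_le_mul hzeta hIbound (norm_nonneg _) (by positivity)
    _ = M / 2 * Real.sqrt ((α ^ 2 + 1) / (α ^ 2 - 1)) := by
        rw [hsqrtval, Real.sqrt_div (by positivity : (0:ℝ) ≤ α ^ 2 + 1)]
        have h1 : Real.sqrt (α ^ 2 - 1) > 0 := Real.sqrt_pos.mpr (by nlinarith)
        field_simp

lemma seg_mem (α : ℝ) (hα : 1 < α) (p q : ℂ)
    (hp : |p.re| + α * |p.im| ≤ 1) (hq : |q.re| + α * |q.im| ≤ 1)
    (τ : ℝ) (hτ : τ ∈ Set.Icc (0:ℝ) 1) :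
    |(p + ↑τ * (q - p)).re| + α * |(p + ↑τ * (q - p)).im| ≤ 1 := by
  rw [Set.mem_Icc] at hτ
  have hmem := (convex_rhombus_le α hα) hp hq (by linarith : (0:ℝ) ≤ 1 - τ) hτ.1 (by ring)
  rw [mem_setOf_eq] at hmem
  have hpt : p + ↑τ * (q - p) = (1 - τ) • p + τ • q := by
    rw [Complex.real_smul, Complex.real_smul]; push_cast; ring
  rw [hpt]; exact hmem

lemma bound_closure (α : ℝ) (hα : 1 < α) (g : ℂ → ℂ)
    (hg : ContinuousOn g (closure {z : ℂ | |z.re| + α * |z.im| < 1}))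
    (M : ℝ) (hM : ∀ w ∈ {z : ℂ | |z.re| + α * |z.im| < 1}, ‖g w‖ ≤ M) :
    ∀ w : ℂ, |w.re| + α * |w.im| ≤ 1 → ‖g w‖ ≤ M := by
  intro w hwle
  have hαpos : (0:ℝ) < α := by linarith
  have hw : w ∈ closure {z : ℂ | |z.re| + α * |z.im| < 1} := by
    rw [closure_rhombus α hαpos]; exact hwle
  have hseq : Tendsto (fun n => (↑(rseq n) : ℂ) * w) atTop (𝓝 w) := by
    simpa using ((Complex.continuous_ofReal.tendsto 1).comp rseq_tendsto).mul_const w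
  have hmem : ∀ n, (↑(rseq n) : ℂ) * w ∈ {z : ℂ | |z.re| + α * |z.im| < 1} := by
    intro n
    obtain ⟨hr0, hr1⟩ := rseq_mem n
    simp only [mem_setOf_eq]
    rw [show (↑(rseq n) : ℂ) * w = rseq n • w from Complex.real_smul, rhN_smul α _ hr0.le]
    calc rseq n * (|w.re| + α * |w.im|) ≤ rseq n * 1 := by
          apply mul_le_mul_of_nonneg_left hwle hr0.le
      _ < 1 := by rw [mul_one]; exact hr1
  have hmem' : ∀ n, (↑(rseq n) : ℂ) * w ∈ closure {z : ℂ | |z.re| + α * |z.im| < 1} :=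
    fun n => subset_closure (hmem n)
  have htd : Tendsto (fun n => ‖g ((↑(rseq n) : ℂ) * w)‖) atTop
      (𝓝 ‖g w‖) := by
    apply (continuous_norm.tendsto _).comp
    apply (hg w hw).tendsto.comp
    exact tendsto_nhdsWithin_of_tendsto_nhds_of_eventually_within _ hseq
      (Eventually.of_forall hmem')
  exact le_of_tendsto htd (Eventually.of_forall fun n => hM _ (hmem n))

set_option maxHeartbeats 2000000 in
theorem stmt_18 (α : ℝ) (hα : 1 < α) (t : ℝ) (ht : 0 < t)
    (y₀ : ℝ → ℂ) (hy₀cont : Continuous y₀) (hy₀bdd : ∃ K, ∀ x, ‖y₀ x‖ ≤ K)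
    (y₀e : ℂ → ℂ)
    (hcont : ContinuousOn y₀e (closure {z : ℂ | |z.re| + α * |z.im| < 1}))
    (hhol : DifferentiableOn ℂ y₀e {z : ℂ | |z.re| + α * |z.im| < 1})
    (hagree : ∀ x ∈ Set.Ioo (-1:ℝ) 1, y₀e x = y₀ x)
    (M : ℝ) (hM : ∀ w ∈ {z : ℂ | |z.re| + α * |z.im| < 1}, ‖y₀e w‖ ≤ M) :
    ∀ z ∈ closure {z : ℂ | |z.re| + α * |z.im| < 1},
      ‖(∫ x₀ in (-1:ℝ)..1,
          (1 / Real.sqrt (4 * π * t) : ℂ) * Complex.exp (-(z - x₀) ^ 2 / (4 * t)) * y₀e x₀)‖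
        ≤ 2 * Real.sqrt ((α ^ 2 + 1) / (α ^ 2 - 1)) * M := by
  intro z hzcl
  have hαpos : (0:ℝ) < α := by linarith
  have hzle : |z.re| + α * |z.im| ≤ 1 := by
    rw [closure_rhombus α hαpos] at hzcl; exact hzcl
  have hM0 : 0 ≤ M := by
    have h0 : (0:ℂ) ∈ {z : ℂ | |z.re| + α * |z.im| < 1} := by
      simp [mem_setOf_eq]
    exact le_trans (norm_nonneg _) (hM 0 h0)
  have hMcl := bound_closure α hα y₀e hcont M hM
  set fbase := fun w : ℂ => (1 / Real.sqrt (4 * π * t) : ℂ) *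
      Complex.exp (-(z - w) ^ 2 / (4 * (t:ℂ))) * y₀e w with hfbase
  have hfd : DifferentiableOn ℂ fbase {z : ℂ | |z.re| + α * |z.im| < 1} := by
    apply DifferentiableOn.mul _ hhol
    apply Differentiable.differentiableOn
    apply Differentiable.const_mul
    apply Differentiable.cexp
    fun_prop
  have hcont' : ContinuousOn y₀e {z : ℂ | |z.re| + α * |z.im| ≤ 1} := by
    rwa [closure_rhombus α hαpos] at hcont
  have hfc : ContinuousOn fbase {z : ℂ | |z.re| + α * |z.im| ≤ 1} := by
    apply ContinuousOn.mul _ hcont'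
    apply Continuous.continuousOn
    fun_prop
  have hwedge := wedge_closure α hα fbase hfd hfc z hzle
  have hm1le : |(-1:ℂ).re| + α * |(-1:ℂ).im| ≤ 1 := by simp
  have hp1le : |(1:ℂ).re| + α * |(1:ℂ).im| ≤ 1 := by simp
  -- side A
  have hmemA : ∀ τ ∈ Set.Icc (0:ℝ) 1,
      |((-1:ℂ) + ↑τ * (z + 1)).re| + α * |((-1:ℂ) + ↑τ * (z + 1)).im| ≤ 1 := by
    intro τ hτ
    have := seg_mem α hα (-1) z hm1le hzle τ hτ
    rw [show (-1:ℂ) + ↑τ * (z - -1) = -1 + ↑τ * (z + 1) by ring] at this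
    exact this
  have hArw : (∫ τ in (0:ℝ)..1, fbase (-1 + ↑τ * (z + 1)))
      = ∫ τ in (0:ℝ)..1, (1 / Real.sqrt (4 * π * t) : ℂ) *
          Complex.exp (-(((1 - τ : ℝ) : ℂ) * (z + 1)) ^ 2 / (4 * (t:ℂ))) *
          (fun τ : ℝ => y₀e (-1 + ↑τ * (z + 1))) τ := by
    apply intervalIntegral.integral_congr
    intro τ _
    simp only [hfbase]
    congr 2
    push_cast
    ring
  have hAbound : ‖(z + 1) * ∫ τ in (0:ℝ)..1, fbase (-1 + ↑τ * (z + 1))‖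
      ≤ M / 2 * Real.sqrt ((α ^ 2 + 1) / (α ^ 2 - 1)) := by
    rw [hArw]
    apply side_estimate α t M hα ht hM0 (z + 1)
    · have h1 : (z+1).re = z.re + 1 := by simp
      have h2 : (z+1).im = z.im := by simp
      rw [h1, h2]
      have h3 := le_abs_self z.re
      have h4 := neg_abs_le z.re
      have h5 := abs_nonneg z.im
      have h6 : 0 ≤ α * |z.im| := mul_nonneg hαpos.le (abs_nonneg _)
      rw [_root_.abs_of_nonneg (by linarith : (0:ℝ) ≤ z.re + 1)]
      linarith
    · apply hcont'.comp
        ((continuous_const.add (Complex.continuous_ofReal.mul continuous_const)).continuousOn)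
      intro τ hτ
      exact hmemA τ hτ
    · intro τ hτ
      exact hMcl _ (hmemA τ hτ)
  -- side B
  have hmemB : ∀ τ ∈ Set.Icc (0:ℝ) 1,
      |(z + ↑τ * ((1:ℂ) - z)).re| + α * |(z + ↑τ * ((1:ℂ) - z)).im| ≤ 1 := by
    intro τ hτ
    exact seg_mem α hα z 1 hzle hp1le τ hτ
  have hBrw2 : (∫ τ in (0:ℝ)..1, fbase (z + ↑τ * (1 - z)))
      = ∫ τ in (0:ℝ)..1, (1 / Real.sqrt (4 * π * t) : ℂ) *
          Complex.exp (-(((τ : ℝ) : ℂ) * (z - 1)) ^ 2 / (4 * (t:ℂ))) *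
          (fun τ : ℝ => y₀e (z + ↑τ * (1 - z))) τ := by
    apply intervalIntegral.integral_congr
    intro τ _
    simp only [hfbase]
    congr 2
    push_cast
    ring
  have hBbound : ‖((1:ℂ) - z) * ∫ τ in (0:ℝ)..1, fbase (z + ↑τ * (1 - z))‖
      ≤ M / 2 * Real.sqrt ((α ^ 2 + 1) / (α ^ 2 - 1)) := by
    rw [norm_mul, hBrw2, show ‖(1:ℂ) - z‖ = ‖z - 1‖ from
      norm_sub_rev 1 z, ← norm_mul]
    apply side_estimate' α t M hα ht hM0 (z - 1)
    · have h1 : (z-1).re = z.re - 1 := by simp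
      have h2 : (z-1).im = z.im := by simp
      rw [h1, h2]
      have h3 := le_abs_self z.re
      have h4 := neg_abs_le z.re
      have h5 := abs_nonneg z.im
      have h6 : 0 ≤ α * |z.im| := mul_nonneg hαpos.le (abs_nonneg _)
      rw [_root_.abs_of_nonpos (by linarith : z.re - 1 ≤ 0)]
      linarith
    · apply hcont'.comp
      · apply Continuous.continuousOn
        fun_prop
      intro τ hτ
      exact hmemB τ hτ
    · intro τ hτ
      exact hMcl _ (hmemB τ hτ)
  -- conclude
  calc ‖(∫ x₀ in (-1:ℝ)..1,
          (1 / Real.sqrt (4 * π * t) : ℂ) * Complex.exp (-(z - x₀) ^ 2 / (4 * t)) * y₀e x₀)‖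
      = ‖(z + 1) * (∫ τ in (0:ℝ)..1, fbase (-1 + ↑τ * (z + 1))) +
          ((1:ℂ) - z) * ∫ τ in (0:ℝ)..1, fbase (z + ↑τ * (1 - z))‖ := by
        rw [← hwedge]
    _ ≤ ‖(z + 1) * ∫ τ in (0:ℝ)..1, fbase (-1 + ↑τ * (z + 1))‖ +
        ‖((1:ℂ) - z) * ∫ τ in (0:ℝ)..1, fbase (z + ↑τ * (1 - z))‖ :=
        norm_add_le _ _
    _ ≤ M / 2 * Real.sqrt ((α ^ 2 + 1) / (α ^ 2 - 1)) +
        M / 2 * Real.sqrt ((α ^ 2 + 1) / (α ^ 2 - 1)) := add_le_add hAbound hBbound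
    _ ≤ 2 * Real.sqrt ((α ^ 2 + 1) / (α ^ 2 - 1)) * M := by
        have h1 : 0 ≤ Real.sqrt ((α ^ 2 + 1) / (α ^ 2 - 1)) := Real.sqrt_nonneg _
        nlinarith
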